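/- (Periodicity modulo p.) Let p be a prime, k ≥ 1, and t_1, …, t_k ∈ ZMod p with t_k ≠ 0, and suppose the core polynomial C(X) = X^k − t_1X^{k−1} − ⋯ − t_k is irreducible over ZMod p. Let F : ℕ → ZMod p be the generalized Fibonacci sequence of parameters t_1, …, t_k. Then F is purely periodic with period dividing p^k − 1: F_{n + (p^k − 1)} = F_n for all n ≥ 0. -/

import Mathlib

open Polynomial in
/-- Periodicity modulo `p`: a GFP sequence over `ZMod p` whose core polynomial
is irreducible of degree `k` (with nonzero constant parameter `t_k`) is purely
periodic with period dividing `p^k − 1`. -/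
theorem gfp_periodic_mod_p (p : ℕ) (hp : p.Prime) (k : ℕ) (hk : 1 ≤ k)
    (t : ℕ → ZMod p) (htk : t k ≠ 0)
    (hirr : Irreducible
      ((X : Polynomial (ZMod p)) ^ k - ∑ j ∈ Finset.Icc 1 k, C (t j) * X ^ (k - j)))
    (F : ℕ → ZMod p) (hF0 : F 0 = 1)
    (hF : ∀ n, 1 ≤ n → F n = ∑ j ∈ Finset.Icc 1 (min n k), t j * F (n - j)) :
    ∀ n : ℕ, F (n + (p ^ k - 1)) = F n := by
  haveI := Fact.mk hp
  set q : Polynomial (ZMod p) :=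
    X ^ k - ∑ j ∈ Finset.Icc 1 k, C (t j) * X ^ (k - j) with hqdef
  haveI := Fact.mk hirr
  have hdegsum : (∑ j ∈ Finset.Icc 1 k, C (t j) * X ^ (k - j) : Polynomial (ZMod p)).degree
      < (k : ℕ) := by
    apply lt_of_le_of_lt (Polynomial.degree_sum_le _ _)
    apply Finset.sup_lt_iff (by exact_mod_cast WithBot.bot_lt_coe k) |>.mpr
    intro j hj
    apply lt_of_le_of_lt (Polynomial.degree_C_mul_X_pow_le _ _)
    rw [Finset.mem_Icc] at hj
    have : k - j < k := by omega
    exact_mod_cast Nat.cast_lt.mpr this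
  have hmon : q.Monic := Polynomial.monic_X_pow_sub hdegsum
  have hdeg : q.natDegree = k := by
    rw [hqdef, Polynomial.natDegree_sub_eq_left_of_natDegree_lt, Polynomial.natDegree_X_pow]
    rw [Polynomial.natDegree_X_pow]
    rcases eq_or_ne (∑ j ∈ Finset.Icc 1 k, C (t j) * X ^ (k - j) : Polynomial (ZMod p)) 0
      with h0 | h0
    · rw [h0, Polynomial.natDegree_zero]; omega
    · exact (Polynomial.natDegree_lt_iff_degree_lt h0).mpr hdegsum
  have hq0 : q ≠ 0 := hmon.ne_zero
  set K := AdjoinRoot q with hK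
  set pb : PowerBasis (ZMod p) K := AdjoinRoot.powerBasis hq0 with hpb
  have hdim : pb.dim = k := by rw [hpb, AdjoinRoot.powerBasis_dim, hdeg]
  set b : Module.Basis (Fin k) (ZMod p) K := pb.basis.reindex (finCongr hdim) with hb
  set α : K := AdjoinRoot.root q with hα
  have hbase : ∀ i : Fin k, b i = α ^ (i : ℕ) := by
    intro i
    rw [hb, Module.Basis.reindex_apply, PowerBasis.coe_basis]
    have hg : pb.gen = α := by rw [hpb, AdjoinRoot.powerBasis_gen]
    rw [hg]
    rfl
  have hroot : α ^ k = ∑ j ∈ Finset.Icc 1 k, t j • α ^ (k - j) := by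
    have h := AdjoinRoot.mk_self (f := q)
    rw [hqdef, map_sub, map_pow, map_sum, sub_eq_zero, AdjoinRoot.mk_X] at h
    rw [← hα] at h
    rw [h]
    refine Finset.sum_congr rfl fun j _ => ?_
    rw [map_mul, map_pow, AdjoinRoot.mk_C, AdjoinRoot.mk_X, ← hα, Algebra.smul_def]
    rfl
  have hrec : ∀ m : ℕ, α ^ (m + k) = ∑ j ∈ Finset.Icc 1 k, t j • α ^ (m + k - j) := by
    intro m
    rw [pow_add, hroot, Finset.mul_sum]
    refine Finset.sum_congr rfl fun j hj => ?_
    rw [Finset.mem_Icc] at hj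
    have he : m + k - j = m + (k - j) := by omega
    rw [he, mul_smul_comm, ← pow_add]
  have hk1 : k - 1 < k := by omega
  set c : ℕ → ZMod p := fun n => b.repr (α ^ n) ⟨k - 1, hk1⟩ with hc
  have hc_basis : ∀ m : ℕ, ∀ hm : m < k, c m = if m = k - 1 then 1 else 0 := by
    intro m hm
    rw [hc]
    simp only
    rw [show (α ^ m) = b ⟨m, hm⟩ from (hbase ⟨m, hm⟩).symm, Module.Basis.repr_self,
      Finsupp.single_apply]
    simp only [Fin.mk.injEq]
  have hc_rec : ∀ m : ℕ, c (m + k) = ∑ j ∈ Finset.Icc 1 k, t j * c (m + k - j) := by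
    intro m
    simp only [hc, hrec m, map_sum, LinearEquiv.map_smul, Finsupp.coe_finset_sum,
      Finset.sum_apply, Finsupp.smul_apply, smul_eq_mul]
  have hFc : ∀ n : ℕ, F n = c (n + (k - 1)) := by
    intro n
    induction n using Nat.strong_induction_on with
    | _ n ih =>
      rcases Nat.eq_zero_or_pos n with rfl | hn
      · rw [hF0, zero_add, hc_basis (k - 1) hk1, if_pos rfl]
      · rw [hF n hn]
        have hidx : n + (k - 1) = (n - 1) + k := by omega
        rw [hidx, hc_rec (n - 1)]
        rw [← Finset.sum_subset (Finset.Icc_subset_Icc_right (min_le_right n k))]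
        · refine Finset.sum_congr rfl fun j hj => ?_
          rw [Finset.mem_Icc] at hj
          have hjn : j ≤ n := le_trans hj.2 (min_le_left n k)
          rw [ih (n - j) (by omega)]
          have he : n - j + (k - 1) = n - 1 + k - j := by omega
          rw [he]
        · intro j hj hj'
          rw [Finset.mem_Icc] at hj
          simp only [Finset.mem_Icc, not_and, not_le] at hj'
          have hjn : n < j := by
            have := hj' hj.1
            omega
          rw [hc_basis _ (by omega), if_neg (by omega), mul_zero]
  haveI : Fintype K := Module.fintypeOfFintype b
  have hcard : Fintype.card K = p ^ k := by
    rw [Module.card_fintype b, ZMod.card, Fintype.card_fin]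
  have hα0 : α ≠ 0 := by
    intro h0
    rw [h0, zero_pow (by omega : k ≠ 0),
      Finset.sum_eq_single_of_mem k (Finset.mem_Icc.mpr ⟨hk, le_rfl⟩)
        (fun j hj hjk => by
          rw [Finset.mem_Icc] at hj
          rw [zero_pow (by omega : k - j ≠ 0), smul_zero]),
      Nat.sub_self, pow_zero] at hroot
    rcases smul_eq_zero.mp hroot.symm with h | h
    · exact htk h
    · exact one_ne_zero h
  have hα1 : α ^ (p ^ k - 1) = 1 := by
    rw [← hcard]
    exact FiniteField.pow_card_sub_one_eq_one α hα0
  intro n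
  rw [hFc, hFc n]
  have : n + (p ^ k - 1) + (k - 1) = (n + (k - 1)) + (p ^ k - 1) := by omega
  rw [this, hc]
  simp only
  rw [pow_add, hα1, mul_one]
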